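/- Consider Phragmén's Sequential Rule scaled so that each selected candidate carries n units of load instead of one. In every run of the rule, for every step j the following holds: the candidate c selected at step j minimizes the quantity (n + Σ_{i∈N(c′)} ℓ_i(j−1)) / |N(c′)| over all not-yet-selected candidates c′; the resulting maximum load satisfies max_{i∈N} ℓ_i(j) = (n + Σ_{i∈N(c)} ℓ_i(j−1)) / |N(c)|; and the loads update as ℓ_i(j) = max_{i'∈N} ℓ_{i'}(j) for every i ∈ N(c) and ℓ_i(j) = ℓ_i(j−1) for every i ∉ N(c). Consequently, Phragmén's Sequential Rule is equivalent to the money-based procedure in which each voter earns credits at unit speed, a candidate is bought for n credits by its approvers as soon as they jointly hold n credits, and the buyers' credits are reset to zero: after each step j, the remaining credits of voter i equal max_{i'∈N} ℓ_{i'}(j) − ℓ_i(j). -/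

import Mathlib

open Finset

def ValidLoadDistN {C : Type*} {n : ℕ} (A : Fin n → Finset C) (c : C)
    (δ : Fin n → ℝ) : Prop :=
  (∀ i, 0 ≤ δ i) ∧ (∑ i, δ i = (n : ℝ)) ∧ (∀ i, c ∉ A i → δ i = 0)

/-- The set of voters approving candidate `c`. -/
def approvers {C : Type*} [DecidableEq C] {n : ℕ} (A : Fin n → Finset C) (c : C) : Finset (Fin n) :=
  Finset.univ.filter (fun i => c ∈ A i)

lemma mem_approvers {C : Type*} [DecidableEq C] {n : ℕ} {A : Fin n → Finset C} {c : C}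
    {i : Fin n} : i ∈ approvers A c ↔ c ∈ A i := by
  simp [approvers]

section Main

variable {C : Type*} [Fintype C] [DecidableEq C] {n : ℕ} {k : ℕ}

/-- the "price" of candidate c at step m -/
noncomputable def pr (A : Fin n → Finset C) (load : ℕ → Fin n → ℝ) (m : ℕ) (c : C) : ℝ :=
  ((n : ℝ) + ∑ i ∈ approvers A c, load m i) / ((approvers A c).card : ℝ)

omit [Fintype C] in
lemma card_pos' {A : Fin n → Finset C} {c : C} (h : (approvers A c).Nonempty) :
    (0 : ℝ) < ((approvers A c).card : ℝ) := by
  exact_mod_cast Finset.card_pos.mpr h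

lemma pr_card {A : Fin n → Finset C} {load : ℕ → Fin n → ℝ} {m : ℕ} {c : C}
    (h : (approvers A c).Nonempty) :
    ((approvers A c).card : ℝ) * pr A load m c = (n : ℝ) + ∑ i ∈ approvers A c, load m i := by
  have := card_pos' (A := A) (c := c) h
  rw [pr]
  field_simp [this.ne']

lemma phragmen_step (hn : 0 < n)
    (A : Fin n → Finset C)
    (cand : Fin k → C) (load : ℕ → Fin n → ℝ) (δ : Fin k → Fin n → ℝ)
    (hinj : Function.Injective cand)
    (hvalid : ∀ j : Fin k, ValidLoadDistN A (cand j) (δ j))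
    (hupd : ∀ (j : Fin k) (i : Fin n), load ((j : ℕ) + 1) i = load (j : ℕ) i + δ j i)
    (hopt : ∀ j : Fin k, ∀ c' : C, (∀ j' : Fin k, j' < j → cand j' ≠ c') →
      ∀ δ' : Fin n → ℝ, ValidLoadDistN A c' δ' →
        (⨆ i, load (j : ℕ) i + δ j i) ≤ (⨆ i, load (j : ℕ) i + δ' i))
    (j : Fin k)
    (h1 : ∀ i, 0 ≤ load (j : ℕ) i)
    (h2 : ∀ c : C, (∀ j' : Fin k, j' < j → cand j' ≠ c) → (approvers A c).Nonempty →
      (⨆ i, load (j : ℕ) i) ≤ pr A load (j : ℕ) c) :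
    (approvers A (cand j)).Nonempty ∧
    ((⨆ i, load ((j : ℕ) + 1) i) = pr A load (j : ℕ) (cand j)) ∧
    (∀ c' : C, (∀ j' : Fin k, j' < j → cand j' ≠ c') → (approvers A c').Nonempty →
      pr A load (j : ℕ) (cand j) ≤ pr A load (j : ℕ) c') ∧
    (∀ i, cand j ∈ A i → load ((j : ℕ) + 1) i = pr A load (j : ℕ) (cand j)) ∧
    (∀ i, cand j ∉ A i → load ((j : ℕ) + 1) i = load (j : ℕ) i) := by
  haveI : Nonempty (Fin n) := ⟨⟨0, hn⟩⟩
  obtain ⟨hδ0, hδsum, hδz⟩ := hvalid j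
  have hbdd : ∀ f : Fin n → ℝ, BddAbove (Set.range f) :=
    fun f => Set.Finite.bddAbove (Set.finite_range f)
  -- approvers of cand j nonempty
  have hSne : (approvers A (cand j)).Nonempty := by
    by_contra h
    rw [Finset.not_nonempty_iff_eq_empty] at h
    have hz : ∑ i, δ j i = 0 := by
      refine Finset.sum_eq_zero fun i _ => hδz i fun hc => ?_
      have : i ∈ approvers A (cand j) := mem_approvers.mpr hc
      simp [h] at this
    rw [hδsum] at hz
    exact absurd hz (by positivity)
  have havail : ∀ j' : Fin k, j' < j → cand j' ≠ cand j :=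
    fun j' hj' h => (ne_of_lt hj') (hinj h)
  have hLv : (⨆ i, load (j : ℕ) i) ≤ pr A load (j : ℕ) (cand j) := h2 (cand j) havail hSne
  -- equalizing distribution for any candidate whose price is above current max load
  have hequal : ∀ c' : C, (approvers A c').Nonempty →
      (⨆ i, load (j : ℕ) i) ≤ pr A load (j : ℕ) c' →
      ∃ d : Fin n → ℝ, ValidLoadDistN A c' d ∧
        (⨆ i, load (j : ℕ) i + d i) = pr A load (j : ℕ) c' := by
    intro c' hne hLle
    set w := pr A load (j : ℕ) c' with hw
    have hcw := pr_card (load := load) (m := (j : ℕ)) hne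
    rw [← hw] at hcw
    have hiw : ∀ i, load (j : ℕ) i ≤ w :=
      fun i => le_trans (le_ciSup (hbdd _) i) hLle
    refine ⟨fun i => if c' ∈ A i then w - load (j : ℕ) i else 0, ⟨?_, ?_, ?_⟩, ?_⟩
    · intro i; dsimp only; split
      · have := hiw i; linarith
      · exact le_refl 0
    · rw [← Finset.sum_filter]
      have : (Finset.univ.filter fun i => c' ∈ A i) = approvers A c' := rfl
      rw [this, Finset.sum_sub_distrib, Finset.sum_const, nsmul_eq_mul]
      linarith
    · intro i hi; simp [hi]
    · have hub : ∀ i, load (j : ℕ) i + (if c' ∈ A i then w - load (j : ℕ) i else 0) ≤ w := by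
        intro i; split
        · linarith
        · simpa using hiw i
      refine le_antisymm (ciSup_le hub) ?_
      obtain ⟨i0, hi0⟩ := hne
      have hmem : c' ∈ A i0 := mem_approvers.mp hi0
      have : load (j : ℕ) i0 + (if c' ∈ A i0 then w - load (j : ℕ) i0 else 0) = w := by
        simp [hmem]
      calc w = load (j : ℕ) i0 + (if c' ∈ A i0 then w - load (j : ℕ) i0 else 0) := this.symm
        _ ≤ _ := le_ciSup
          (hbdd fun i => load (j : ℕ) i + if c' ∈ A i then w - load (j : ℕ) i else 0) i0
  obtain ⟨d, hd, hsupd⟩ := hequal (cand j) hSne hLv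
  -- the chosen distribution achieves at most the price
  have hle : (⨆ i, load (j : ℕ) i + δ j i) ≤ pr A load (j : ℕ) (cand j) := by
    rw [← hsupd]; exact hopt j (cand j) havail d hd
  have hub2 : ∀ i, load (j : ℕ) i + δ j i ≤ pr A load (j : ℕ) (cand j) :=
    fun i => le_trans (le_ciSup (hbdd fun i => load (j : ℕ) i + δ j i) i) hle
  -- sum over approvers
  have hδS : ∑ i ∈ approvers A (cand j), δ j i = (n : ℝ) := by
    rw [← hδsum]
    exact Finset.sum_subset (Finset.subset_univ _)
      (fun i _ hiS => hδz i fun h => hiS (mem_approvers.mpr h))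
  have hcard := pr_card (load := load) (m := (j : ℕ)) hSne
  have hsumS : ∑ i ∈ approvers A (cand j), (load (j : ℕ) i + δ j i) =
      ((approvers A (cand j)).card : ℝ) * pr A load (j : ℕ) (cand j) := by
    rw [Finset.sum_add_distrib, hδS, hcard]; ring
  --每 approver raised exactly to the price
  have heach : ∀ i ∈ approvers A (cand j),
      load (j : ℕ) i + δ j i = pr A load (j : ℕ) (cand j) := by
    by_contra h
    push_neg at h
    obtain ⟨i0, hi0, hne0⟩ := h
    have hlt : load (j : ℕ) i0 + δ j i0 < pr A load (j : ℕ) (cand j) :=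
      lt_of_le_of_ne (hub2 i0) hne0
    have : ∑ i ∈ approvers A (cand j), (load (j : ℕ) i + δ j i) <
        ∑ _i ∈ approvers A (cand j), pr A load (j : ℕ) (cand j) := by
      refine Finset.sum_lt_sum (fun i _ => hub2 i) ⟨i0, hi0, hlt⟩
    rw [Finset.sum_const, nsmul_eq_mul, hsumS] at this
    exact lt_irrefl _ this
  have hge : pr A load (j : ℕ) (cand j) ≤ (⨆ i, load (j : ℕ) i + δ j i) := by
    obtain ⟨i0, hi0⟩ := hSne
    calc pr A load (j : ℕ) (cand j) = load (j : ℕ) i0 + δ j i0 := (heach i0 hi0).symm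
      _ ≤ _ := le_ciSup (hbdd fun i => load (j : ℕ) i + δ j i) i0
  have hsup : (⨆ i, load ((j : ℕ) + 1) i) = pr A load (j : ℕ) (cand j) := by
    have hfun : (fun i => load ((j : ℕ) + 1) i) = fun i => load (j : ℕ) i + δ j i :=
      funext (hupd j)
    rw [show (⨆ i, load ((j : ℕ) + 1) i) = ⨆ i, load (j : ℕ) i + δ j i by rw [hfun]]
    exact le_antisymm hle hge
  refine ⟨hSne, hsup, ?_, ?_, ?_⟩
  · intro c' hc' hne'
    obtain ⟨d', hd', hsupd'⟩ := hequal c' hne' (h2 c' hc' hne')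
    calc pr A load (j : ℕ) (cand j) ≤ (⨆ i, load (j : ℕ) i + δ j i) := hge
      _ ≤ (⨆ i, load (j : ℕ) i + d' i) := hopt j c' hc' d' hd'
      _ = pr A load (j : ℕ) c' := hsupd'
  · intro i hi
    rw [hupd j i]
    exact heach i (mem_approvers.mpr hi)
  · intro i hi
    rw [hupd j i, hδz i hi, add_zero]

lemma phragmen_ind (hn : 0 < n)
    (A : Fin n → Finset C)
    (cand : Fin k → C) (load : ℕ → Fin n → ℝ) (δ : Fin k → Fin n → ℝ)
    (hinj : Function.Injective cand)
    (h0 : ∀ i, load 0 i = 0)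
    (hvalid : ∀ j : Fin k, ValidLoadDistN A (cand j) (δ j))
    (hupd : ∀ (j : Fin k) (i : Fin n), load ((j : ℕ) + 1) i = load (j : ℕ) i + δ j i)
    (hopt : ∀ j : Fin k, ∀ c' : C, (∀ j' : Fin k, j' < j → cand j' ≠ c') →
      ∀ δ' : Fin n → ℝ, ValidLoadDistN A c' δ' →
        (⨆ i, load (j : ℕ) i + δ j i) ≤ (⨆ i, load (j : ℕ) i + δ' i)) :
    ∀ m : ℕ, m ≤ k →
      (∀ i, 0 ≤ load m i) ∧
      (∀ c : C, (∀ j' : Fin k, (j' : ℕ) < m → cand j' ≠ c) → (approvers A c).Nonempty →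
        (⨆ i, load m i) ≤ pr A load m c) := by
  haveI : Nonempty (Fin n) := ⟨⟨0, hn⟩⟩
  intro m
  induction m with
  | zero =>
    intro _
    refine ⟨fun i => by simp [h0], fun c _ hne => ?_⟩
    have h1 : (⨆ i, load 0 i) = 0 := by simp [h0]
    rw [h1, pr]
    have := card_pos' (A := A) (c := c) hne
    have hs : 0 ≤ ∑ i ∈ approvers A c, load 0 i := by simp [h0]
    positivity
  | succ m ih =>
    intro hm
    have hmk : m < k := hm
    set j : Fin k := ⟨m, hmk⟩ with hj
    obtain ⟨ha, hb⟩ := ih (le_of_lt hmk)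
    have hjm : (j : ℕ) = m := rfl
    obtain ⟨hSne, hsup, hmin, happ, hnot⟩ :=
      phragmen_step hn A cand load δ hinj hvalid hupd hopt j
        (by rw [hjm]; exact ha)
        (by
          intro c hc hne
          rw [hjm]
          exact hb c (fun j' hj' => hc j' (by rw [Fin.lt_def, hjm]; exact hj')) hne)
    rw [hjm] at hsup hmin happ hnot
    have hmono : ∀ i, load m i ≤ load (m + 1) i := by
      intro i
      have := hupd j i
      rw [hjm] at this
      rw [this]
      have := (hvalid j).1 i
      linarith
    constructor
    · intro i
      exact le_trans (ha i) (hmono i)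
    · intro c hc hne
      have hcj : ∀ j' : Fin k, j' < j → cand j' ≠ c := by
        intro j' hj'
        exact hc j' (by rw [Fin.lt_def, hjm] at hj'; omega)
      have h1 : (⨆ i, load (m + 1) i) = pr A load m (cand j) := hsup
      have h2' : pr A load m (cand j) ≤ pr A load m c := hmin c hcj hne
      have h3 : pr A load m c ≤ pr A load (m + 1) c := by
        rw [pr, pr]
        have hcp := card_pos' (A := A) (c := c) hne
        gcongr with i hi
        exact hmono i
      rw [h1]
      exact le_trans h2' h3

end Main

theorem phragmen_money_based_equivalence
    {C : Type*} [Fintype C] [DecidableEq C] {n : ℕ} (hn : 0 < n)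
    (A : Fin n → Finset C) (k : ℕ)
    (cand : Fin k → C) (load : ℕ → Fin n → ℝ) (δ : Fin k → Fin n → ℝ)
    (hinj : Function.Injective cand)
    (h0 : ∀ i, load 0 i = 0)
    (hvalid : ∀ j : Fin k, ValidLoadDistN A (cand j) (δ j))
    (hupd : ∀ (j : Fin k) (i : Fin n), load ((j : ℕ) + 1) i = load (j : ℕ) i + δ j i)
    (hopt : ∀ j : Fin k, ∀ c' : C, (∀ j' : Fin k, j' < j → cand j' ≠ c') →
      ∀ δ' : Fin n → ℝ, ValidLoadDistN A c' δ' →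
        (⨆ i, load (j : ℕ) i + δ j i) ≤ (⨆ i, load (j : ℕ) i + δ' i)) :
    ∀ j : Fin k,
      (∀ c' : C, (∀ j' : Fin k, j' < j → cand j' ≠ c') → (approvers A c').Nonempty →
        ((n : ℝ) + ∑ i ∈ approvers A (cand j), load (j : ℕ) i) /
            ((approvers A (cand j)).card : ℝ) ≤
          ((n : ℝ) + ∑ i ∈ approvers A c', load (j : ℕ) i) / ((approvers A c').card : ℝ)) ∧
      ((⨆ i, load ((j : ℕ) + 1) i) =
        ((n : ℝ) + ∑ i ∈ approvers A (cand j), load (j : ℕ) i) /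
          ((approvers A (cand j)).card : ℝ)) ∧
      (∀ i : Fin n,
        (cand j ∈ A i → load ((j : ℕ) + 1) i = ⨆ i' : Fin n, load ((j : ℕ) + 1) i') ∧
        (cand j ∉ A i → load ((j : ℕ) + 1) i = load (j : ℕ) i)) ∧
      (∑ i ∈ approvers A (cand j),
        ((⨆ i' : Fin n, load ((j : ℕ) + 1) i') - load (j : ℕ) i) = (n : ℝ)) := by
  intro j
  obtain ⟨ha, hb⟩ := phragmen_ind hn A cand load δ hinj h0 hvalid hupd hopt (j : ℕ) j.isLt.le
  obtain ⟨hSne, hsup, hmin, happ, hnot⟩ :=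
    phragmen_step hn A cand load δ hinj hvalid hupd hopt j ha
      (fun c hc hne => hb c (fun j' hj' => hc j' (Fin.lt_def.mpr hj')) hne)
  have hprdef : pr A load (j : ℕ) (cand j) =
      ((n : ℝ) + ∑ i ∈ approvers A (cand j), load (j : ℕ) i) /
        ((approvers A (cand j)).card : ℝ) := rfl
  refine ⟨fun c' hc' hne' => hmin c' hc' hne', hsup, ?_, ?_⟩
  · intro i
    constructor
    · intro hi
      rw [happ i hi, hsup]
    · exact hnot i
  · have hcard := pr_card (load := load) (m := (j : ℕ)) hSne
    rw [hsup, Finset.sum_sub_distrib, Finset.sum_const, nsmul_eq_mul, hcard]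
    ring
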